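/- If two continuous curves f, g : [0,1] → ℂ satisfy |f(t) − g(t)| < |f(t)| for all t, and both are loops (f(0)=f(1), g(0)=g(1)) avoiding 0, then f and g have the same winding number around 0 (dog-on-a-leash / Rouché-type theorem). -/

import Mathlib

open Set

/-- `WindingIs γ p n` says that the loop `γ` (on `[0,1]`) has winding number `n`
around the point `p`, expressed via a continuous lift of the angle. -/
def WindingIs (γ : ℝ → ℂ) (p : ℂ) (n : ℤ) : Prop :=
  ∃ θ : ℝ → ℝ, ContinuousOn θ (Icc 0 1) ∧
    (∀ t ∈ Icc (0:ℝ) 1, γ t - p = (‖γ t - p‖ : ℂ) * Complex.exp (θ t * Complex.I)) ∧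
    θ 1 - θ 0 = 2 * Real.pi * n

/-- Dog-on-a-leash / Rouché: if two continuous loops avoiding 0 satisfy
 |f(t)-g(t)| < |f(t)| for all t, they have the same winding number around 0. -/
theorem dog_on_a_leash (f g : ℝ → ℂ)
    (hf : ContinuousOn f (Icc 0 1)) (hg : ContinuousOn g (Icc 0 1))
    (hfl : f 0 = f 1) (hgl : g 0 = g 1)
    (hf0 : ∀ t ∈ Icc (0:ℝ) 1, f t ≠ 0) (hg0 : ∀ t ∈ Icc (0:ℝ) 1, g t ≠ 0)
    (hclose : ∀ t ∈ Icc (0:ℝ) 1, ‖f t - g t‖ < ‖f t‖) :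
    ∀ m n : ℤ, WindingIs f 0 m → WindingIs g 0 n → m = n := by
  rintro m n ⟨θf, hθfc, hθf, hθfw⟩ ⟨θg, hθgc, hθg, hθgw⟩
  simp only [sub_zero] at hθf hθg
  set φ : ℝ → ℝ := fun t => θg t - θf t with hφdef
  have hφc : ContinuousOn φ (Icc 0 1) := hθgc.sub hθfc
  have hpi : (0:ℝ) < Real.pi := Real.pi_pos
  -- cos (φ t) > 0 for all t ∈ [0,1]
  have hcos : ∀ t ∈ Icc (0:ℝ) 1, 0 < Real.cos (φ t) := by
    intro t ht
    have hft := hθf t ht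
    have hgt := hθg t ht
    set r := ‖f t‖ with hr
    set s := ‖g t‖ with hs
    set a := θf t with ha
    set b := θg t with hb
    have hfn : 0 < r := norm_pos_iff.mpr (hf0 t ht)
    have hgn : 0 < s := norm_pos_iff.mpr (hg0 t ht)
    have hre : 0 < (f t * (starRingEnd ℂ) (g t)).re := by
      have h1 := hclose t ht
      have h2 : Complex.normSq (f t - g t) < Complex.normSq (f t) := by
        rw [← Complex.sq_norm, ← Complex.sq_norm]
        have := norm_nonneg (f t - g t)
        nlinarith
      have h3 := Complex.normSq_sub (f t) (g t)
      have h4 : 0 < Complex.normSq (g t) := Complex.normSq_pos.mpr (hg0 t ht)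
      nlinarith
    have hconj : (starRingEnd ℂ) (g t)
        = (s : ℂ) * Complex.exp (-(b : ℂ) * Complex.I) := by
      rw [hgt, map_mul, Complex.conj_ofReal, ← Complex.exp_conj]
      congr 1
      rw [map_mul, Complex.conj_ofReal, Complex.conj_I]
      ring
    have hprod : f t * (starRingEnd ℂ) (g t)
        = ((r * s : ℝ) : ℂ) * Complex.exp (((a - b : ℝ) : ℂ) * Complex.I) := by
      rw [hft, hconj, mul_mul_mul_comm, ← Complex.exp_add]
      push_cast
      ring_nf
    have hre2 : (f t * (starRingEnd ℂ) (g t)).re = r * s * Real.cos (a - b) := by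
      rw [hprod, Complex.re_ofReal_mul, Complex.exp_ofReal_mul_I_re]
    have hc : 0 < Real.cos (a - b) := by
      rw [hre2] at hre
      nlinarith [mul_pos hfn hgn]
    have hφt : φ t = b - a := rfl
    rw [hφt, ← neg_sub a b, Real.cos_neg]
    exact hc
  -- center: c = 2πk close to φ 0
  have h0m : (0:ℝ) ∈ Icc (0:ℝ) 1 := ⟨le_refl 0, zero_le_one⟩
  have h1m : (1:ℝ) ∈ Icc (0:ℝ) 1 := ⟨zero_le_one, le_refl 1⟩
  obtain ⟨k, hk⟩ : ∃ k : ℤ, |φ 0 - k * (2 * Real.pi)| < Real.pi / 2 := by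
    refine ⟨round (φ 0 / (2 * Real.pi)), ?_⟩
    have h2pi : (0:ℝ) < 2 * Real.pi := by linarith
    have hb : |φ 0 / (2 * Real.pi) - round (φ 0 / (2 * Real.pi))| ≤ 1 / 2 :=
      abs_sub_round _
    set k := round (φ 0 / (2 * Real.pi))
    have hb2 : |φ 0 - k * (2 * Real.pi)| ≤ Real.pi := by
      have heq : φ 0 - (k : ℝ) * (2 * Real.pi)
          = (φ 0 / (2 * Real.pi) - k) * (2 * Real.pi) := by
        field_simp
      rw [heq, abs_mul, abs_of_pos h2pi]
      calc |φ 0 / (2 * Real.pi) - (k : ℝ)| * (2 * Real.pi)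
          ≤ 1 / 2 * (2 * Real.pi) :=
            mul_le_mul_of_nonneg_right (abs_sub_round _) (le_of_lt h2pi)
        _ = Real.pi := by ring
    by_contra hcon
    push_neg at hcon
    have hcz : Real.cos (φ 0) ≤ 0 := by
      have he : Real.cos (φ 0) = Real.cos (φ 0 - k * (2 * Real.pi)) := by
        rw [← Real.cos_add_int_mul_two_pi (φ 0 - k * (2 * Real.pi)) k]
        ring_nf
      rw [he, ← Real.cos_abs]
      exact Real.cos_nonpos_of_pi_div_two_le_of_le hcon (by linarith)
    exact absurd (hcos 0 h0m) (not_lt.mpr hcz)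
  set c : ℝ := k * (2 * Real.pi) with hcdef
  rw [abs_lt] at hk
  -- φ stays in Ioo (c - π/2) (c + π/2)
  have hstay : ∀ t ∈ Icc (0:ℝ) 1, φ t ∈ Ioo (c - Real.pi / 2) (c + Real.pi / 2) := by
    intro t ht
    by_contra hcon
    simp only [mem_Ioo, not_and_or, not_lt] at hcon
    have hsub : Icc (0:ℝ) t ⊆ Icc 0 1 := Icc_subset_Icc le_rfl ht.2
    have hφct : ContinuousOn φ (Icc 0 t) := hφc.mono hsub
    rcases hcon with hle | hge
    · -- φ t ≤ c - π/2 ; IVT downward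
      have hmem : c - Real.pi / 2 ∈ Icc (φ t) (φ 0) := ⟨hle, by linarith⟩
      have := intermediate_value_Icc' ht.1 hφct hmem
      obtain ⟨s, hs, hφs⟩ := this
      have hsm : s ∈ Icc (0:ℝ) 1 := hsub hs
      have : Real.cos (φ s) = 0 := by
        rw [hφs]
        have : c - Real.pi / 2 = -(Real.pi / 2) + k * (2 * Real.pi) := by ring
        rw [this, Real.cos_add_int_mul_two_pi, Real.cos_neg, Real.cos_pi_div_two]
      exact absurd (hcos s hsm) (by rw [this]; exact lt_irrefl 0)
    · -- c + π/2 ≤ φ t ; IVT upward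
      have hmem : c + Real.pi / 2 ∈ Icc (φ 0) (φ t) := ⟨by linarith, hge⟩
      have := intermediate_value_Icc ht.1 hφct hmem
      obtain ⟨s, hs, hφs⟩ := this
      have hsm : s ∈ Icc (0:ℝ) 1 := hsub hs
      have : Real.cos (φ s) = 0 := by
        rw [hφs]
        have : c + Real.pi / 2 = Real.pi / 2 + k * (2 * Real.pi) := by ring
        rw [this, Real.cos_add_int_mul_two_pi, Real.cos_pi_div_two]
      exact absurd (hcos s hsm) (by rw [this]; exact lt_irrefl 0)
  have h0 := hstay 0 h0m
  have h1 := hstay 1 h1m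
  -- φ 1 - φ 0 = 2π(n - m), and |φ 1 - φ 0| < π
  have hdiff : φ 1 - φ 0 = 2 * Real.pi * n - 2 * Real.pi * m := by
    simp only [hφdef]
    rw [show θg 1 - θf 1 - (θg 0 - θf 0) = (θg 1 - θg 0) - (θf 1 - θf 0) by ring,
      hθfw, hθgw]
  have hlt : |2 * Real.pi * (n - m : ℤ)| < Real.pi := by
    rw [abs_lt]
    push_cast
    obtain ⟨a1, a2⟩ := h0
    obtain ⟨b1, b2⟩ := h1
    constructor <;> nlinarith [hdiff]
  have habs : |((n - m : ℤ) : ℝ)| < 1 := by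
    rw [abs_mul, abs_of_pos (by linarith : (0:ℝ) < 2 * Real.pi)] at hlt
    have h2pi : (0:ℝ) < 2 * Real.pi := by linarith
    nlinarith [abs_nonneg ((n - m : ℤ) : ℝ)]
  have h5 : |n - m| < 1 := by exact_mod_cast habs
  have := abs_lt.mp h5
  omega
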